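/- Let X be an integral scheme, Z a divisor on X (closed everywhere of codimension 1), assume X universally catenary and Noetherian with a dimension function δ. If t is a point of X∖Z of codimension p and z ∈ Z is a specialization of t, then δ(z) ≤ δ(t) − 1; consequently z has codimension at least p in Z, and for any closed subscheme T of X∖Z of codimension ≥ p, the intersection of the Zariski closure of T in X with Z has codimension ≥ p in Z. -/

import Mathlib

/-!
STATEMENT 17: Let `X` be an integral (irreducible, with generic point `ξ`) universally
catenary Noetherian scheme with a dimension function `δ`, and `Z ⊆ X` a divisor (a closed
subset).  If `t` is a point of `X ∖ Z` of codimension `p` and `z ∈ Z` is a specialization of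
`t`, then `δ(z) ≤ δ(t) − 1`; consequently `z` has codimension at least `p` in `Z`, and for any
closed subscheme `T` of `X ∖ Z` of codimension `≥ p`, the intersection of the Zariski closure
of `T` in `X` with `Z` has codimension `≥ p` in `Z`.

We work with the underlying topological space.  `δ` being a dimension function is expressed by
`hδ`: immediate specializations drop `δ` by exactly `1`.  The (universally catenary,
Noetherian) hypothesis is used through `hchain`: every nontrivial specialization is connected
by a finite nonempty chain of immediate specializations.  Codimension of a point `x` is
measured as `δ(ξ) − δ(x)` in `X`, and as `(δ(ξ) − 1) − δ(x)` in the divisor `Z` (whose generic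
points have `δ`-value `δ(ξ) − 1`).  "Closed subscheme `T` of `X ∖ Z`" is expressed by
`T = closure T ∩ Zᶜ`.
-/

/-- `y` is a specialization of `x`. -/
def SpecializesTo {X : Type*} [TopologicalSpace X] (x y : X) : Prop :=
  y ∈ closure ({x} : Set X)

/-- `y` is an immediate specialization of `x`. -/
def ImmediateSpecialization {X : Type*} [TopologicalSpace X] (x y : X) : Prop :=
  SpecializesTo x y ∧ x ≠ y ∧ ∀ z, SpecializesTo x z → SpecializesTo z y → z = x ∨ z = y

/-- Along a chain of immediate specializations, `δ` drops by at least one. -/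
lemma delta_drop {X : Type*} [TopologicalSpace X]
    (δ : X → ℤ)
    (hδ : ∀ x y, ImmediateSpecialization x y → δ y = δ x - 1)
    (hchain : ∀ x y, SpecializesTo x y → x ≠ y →
      ∃ (n : ℕ) (c : Fin (n + 1) → X), 0 < n ∧ c 0 = x ∧ c (Fin.last n) = y ∧
        ∀ i : Fin n, ImmediateSpecialization (c i.castSucc) (c i.succ)) :
    ∀ x y, SpecializesTo x y → x ≠ y → δ y ≤ δ x - 1 := by
  intro x y hs hne
  obtain ⟨n, c, hn, h0, hl, him⟩ := hchain x y hs hne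
  have key : ∀ k : ℕ, ∀ hk : k ≤ n, δ (c ⟨k, Nat.lt_succ_of_le hk⟩) = δ x - k := by
    intro k
    induction k with
    | zero =>
      intro _
      have : (⟨0, Nat.lt_succ_of_le (Nat.zero_le n)⟩ : Fin (n + 1)) = 0 := rfl
      rw [this, h0]; simp
    | succ k ih =>
      intro hk
      have hk' : k ≤ n := Nat.le_of_succ_le hk
      have hkn : k < n := hk
      have h1 := hδ _ _ (him ⟨k, hkn⟩)
      have hc : (⟨k, hkn⟩ : Fin n).castSucc = ⟨k, Nat.lt_succ_of_le hk'⟩ := rfl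
      have hs' : (⟨k, hkn⟩ : Fin n).succ = ⟨k + 1, Nat.lt_succ_of_le hk⟩ := rfl
      rw [hc, hs'] at h1
      rw [h1, ih hk']
      push_cast
      ring
  have := key n le_rfl
  have hlast : (Fin.last n) = (⟨n, Nat.lt_succ_of_le le_rfl⟩ : Fin (n + 1)) := rfl
  rw [← hlast, hl] at this
  have : δ y = δ x - (n : ℤ) := this
  have hn1 : (1 : ℤ) ≤ n := by exact_mod_cast hn
  omega

/-- Every point of `closure T` lies in a minimal irreducible closed set `S` with
`S = closure (T ∩ S)`. -/
lemma exists_irred_closed {X : Type*} [TopologicalSpace X]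
    [TopologicalSpace.NoetherianSpace X]
    (T : Set X) (z : X) (hz : z ∈ closure T) :
    ∃ S : Set X, IsIrreducible S ∧ IsClosed S ∧ z ∈ S ∧ S = closure (T ∩ S) := by
  set P : TopologicalSpace.Closeds X → Prop :=
    fun S => z ∈ (S : Set X) ∧ (S : Set X) = closure (T ∩ S)
  have hne : ∃ S, P S := by
    refine ⟨⟨closure T, isClosed_closure⟩, hz, ?_⟩
    simp only [TopologicalSpace.Closeds.coe_mk]
    rw [Set.inter_eq_self_of_subset_left subset_closure]
  obtain ⟨S, hPS, hmin⟩ :=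
    (wellFounded_lt (α := TopologicalSpace.Closeds X)).has_min _ hne
  obtain ⟨hzS, hScl⟩ := hPS
  refine ⟨S, ⟨⟨z, hzS⟩, ?_⟩, S.2, hzS, hScl⟩
  rw [isPreirreducible_iff_isClosed_union_isClosed]
  intro A B hA hB hAB
  by_contra h
  push_neg at h
  obtain ⟨hnA, hnB⟩ := h
  have hTS : T ∩ S = (T ∩ S ∩ A) ∪ (T ∩ S ∩ B) := by
    ext w
    constructor
    · rintro ⟨hw1, hw2⟩
      rcases hAB hw2 with h | h
      · exact Or.inl ⟨⟨hw1, hw2⟩, h⟩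
      · exact Or.inr ⟨⟨hw1, hw2⟩, h⟩
    · rintro (⟨h, _⟩ | ⟨h, _⟩) <;> exact h
  have hdecomp : (S : Set X) = closure (T ∩ S ∩ A) ∪ closure (T ∩ S ∩ B) :=
    calc (S : Set X) = closure (T ∩ S) := hScl
      _ = closure ((T ∩ S ∩ A) ∪ (T ∩ S ∩ B)) := by rw [← hTS]
      _ = closure (T ∩ S ∩ A) ∪ closure (T ∩ S ∩ B) := closure_union
  have key : ∀ (C : Set X), IsClosed C → ¬ (S : Set X) ⊆ C →
      z ∈ closure (T ∩ S ∩ C) → False := by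
    intro C hC hnC hzC
    set S' : TopologicalSpace.Closeds X := ⟨closure (T ∩ S ∩ C), isClosed_closure⟩
    have hS'S : (S' : Set X) ⊆ S := by
      rw [hScl]
      exact closure_mono (by intro w hw; exact hw.1)
    have hS'C : (S' : Set X) ⊆ C := hC.closure_subset_iff.mpr (fun w hw => hw.2)
    have hP' : P S' := by
      refine ⟨hzC, le_antisymm ?_ ?_⟩
      · exact closure_mono (fun w hw => ⟨hw.1.1, subset_closure hw⟩)
      · exact (isClosed_closure).closure_subset_iff.mpr (fun w hw => hw.2)
    have hlt : S' < S := by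
      refine lt_of_le_of_ne hS'S ?_
      intro he
      exact hnC (he ▸ hS'C)
    exact hmin S' hP' hlt
  rcases hdecomp ▸ hzS with h | h
  · exact absurd h (fun h => key A hA hnA h)
  · exact absurd h (fun h => key B hB hnB h)

theorem dimension_function_divisor_codim
    {X : Type*} [TopologicalSpace X] [TopologicalSpace.NoetherianSpace X] [QuasiSober X]
    (δ : X → ℤ)
    (hδ : ∀ x y, ImmediateSpecialization x y → δ y = δ x - 1)
    (hchain : ∀ x y, SpecializesTo x y → x ≠ y →
      ∃ (n : ℕ) (c : Fin (n + 1) → X), 0 < n ∧ c 0 = x ∧ c (Fin.last n) = y ∧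
        ∀ i : Fin n, ImmediateSpecialization (c i.castSucc) (c i.succ))
    (ξ : X) (hξ : closure ({ξ} : Set X) = Set.univ)
    (Z : Set X) (hZ : IsClosed Z)
    (p : ℤ) (t : X) (ht : t ∉ Z) (htp : δ ξ - δ t = p) :
    (∀ z, SpecializesTo t z → t ≠ z → δ z ≤ δ t - 1) ∧
    (∀ z ∈ Z, SpecializesTo t z → p ≤ (δ ξ - 1) - δ z) ∧
    (∀ T : Set X, T = closure T ∩ Zᶜ → (∀ t' ∈ T, p ≤ δ ξ - δ t') →
      ∀ z ∈ closure T ∩ Z, p ≤ (δ ξ - 1) - δ z) := by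
  have drop := delta_drop δ hδ hchain
  refine ⟨fun z hs hne => drop t z hs hne, ?_, ?_⟩
  · intro z hzZ hs
    have hne : t ≠ z := fun h => ht (h ▸ hzZ)
    have := drop t z hs hne
    omega
  · intro T hT hTp z hzmem
    obtain ⟨hzC, hzZ⟩ := hzmem
    obtain ⟨S, hirr, hcl, hzS, hSeq⟩ := exists_irred_closed T z hzC
    obtain ⟨g, hg⟩ := QuasiSober.sober hirr hcl
    have hgS : g ∈ S := hg ▸ subset_closure rfl
    have hgnZ : g ∉ Z := by
      intro hgZ
      have hSZ : S ⊆ Z := hg ▸ hZ.closure_subset_iff.mpr (by simpa using hgZ)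
      have : T ∩ S = ∅ := by
        rw [hT]
        ext w
        simp only [Set.mem_inter_iff, Set.mem_compl_iff, Set.mem_empty_iff_false, iff_false]
        rintro ⟨⟨_, hw2⟩, hw3⟩
        exact hw2 (hSZ hw3)
      rw [this, closure_empty] at hSeq
      rw [hSeq] at hzS
      exact hzS
    have hgT : g ∈ T := by
      have hgclT : g ∈ closure T := by
        have : S ⊆ closure T := by
          rw [hSeq]
          exact closure_mono (fun w hw => hw.1)
        exact this hgS
      rw [hT]
      exact ⟨hgclT, hgnZ⟩
    have hspec : SpecializesTo g z := by
      have : z ∈ closure ({g} : Set X) := hg.symm ▸ hzS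
      exact this
    have hne : g ≠ z := fun h => hgnZ (h ▸ hzZ)
    have h1 := drop g z hspec hne
    have h2 := hTp g hgT
    omega
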